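/- Let f(u) = -p u(1-u)^2 - q u(1-u) with p = C_i D_i + C_g D_g and q = C_g D_g, where C_g < 0, D_i > 4D_g > 0. Then f is strictly concave on (0,1) (i.e. f'' < 0 on (0,1)) if and only if 0 ≤ s d ≤ 3/2, where s = C_i/|C_g| and d = D_i/D_g. -/

import Mathlib

lemma lin_neg_aux (a b : ℝ) (h : ∀ u ∈ Set.Ioo (0:ℝ) 1, a + b*u < 0) : a ≤ 0 := by
  by_contra h'
  push_neg at h'
  rcases le_or_gt 0 b with hb | hb
  · have := h (1/2) ⟨by norm_num, by norm_num⟩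
    nlinarith
  · have ha2 : 0 < a / (-2*b) := div_pos h' (by linarith)
    set u := min (1/2 : ℝ) (a/(-2*b)) with hu
    have hu0 : 0 < u := lt_min (by norm_num) ha2
    have hu1 : u < 1 := lt_of_le_of_lt (min_le_left _ _) (by norm_num)
    have h2 := h u ⟨hu0, hu1⟩
    have hle : u ≤ a/(-2*b) := min_le_right _ _
    have hm : b * (a/(-2*b)) ≤ b * u := mul_le_mul_of_nonpos_left hle (le_of_lt hb)
    have heq : b * (a/(-2*b)) = -(a/2) := by
      field_simp
      rw [div_self hb.ne]
    nlinarith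

theorem stmt_6 (Ci Cg Di Dg : ℝ) (hCg : Cg < 0) (h1 : Di > 4 * Dg) (h2 : 4 * Dg > 0) :
    let p := Ci * Di + Cg * Dg
    let q := Cg * Dg
    let f : ℝ → ℝ := fun u => -p * u * (1-u)^2 - q * u * (1-u)
    let s := Ci / |Cg|
    let d := Di / Dg
    (∀ u ∈ Set.Ioo (0:ℝ) 1, deriv (deriv f) u < 0) ↔ (0 ≤ s * d ∧ s * d ≤ 3/2) := by
  intro p q f s d
  have hpdef : p = Ci * Di + Cg * Dg := rfl
  have hqdef : q = Cg * Dg := rfl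
  have hsdef : s = Ci / |Cg| := rfl
  have hddef : d = Di / Dg := rfl
  have hDg : 0 < Dg := by linarith
  have hqneg : q < 0 := by rw [hqdef]; exact mul_neg_of_neg_of_pos hCg hDg
  -- first derivative
  have hf' : deriv f = fun u => (-p-q)*1 + (2*p+q)*(2*u) + (-p)*(3*u^2) := by
    funext u
    have hfe : f = fun x : ℝ => (-p-q)*x + (2*p+q)*x^2 + (-p)*x^3 := by
      funext x; show -p * x * (1-x)^2 - q * x * (1-x) = _; ring
    have h1' : HasDerivAt (fun x:ℝ => x) 1 u := hasDerivAt_id u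
    have h2' : HasDerivAt (fun x:ℝ => x^2) (2*u) u := by simpa using hasDerivAt_pow 2 u
    have h3' : HasDerivAt (fun x:ℝ => x^3) (3*u^2) u := by simpa using hasDerivAt_pow 3 u
    have hsum : HasDerivAt (fun x:ℝ => (-p-q)*x + (2*p+q)*x^2 + (-p)*x^3)
        ((-p-q)*1 + (2*p+q)*(2*u) + (-p)*(3*u^2)) u :=
      ((h1'.const_mul _).add (h2'.const_mul _)).add (h3'.const_mul _)
    rw [hfe, hsum.deriv]
  -- second derivative
  have hf'' : ∀ u : ℝ, deriv (deriv f) u = (4*p + 2*q) - 6*p*u := by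
    intro u
    rw [hf']
    have h1' : HasDerivAt (fun x:ℝ => x) 1 u := hasDerivAt_id u
    have h2' : HasDerivAt (fun x:ℝ => x^2) (2*u) u := by simpa using hasDerivAt_pow 2 u
    have hg : HasDerivAt (fun x:ℝ => (-p-q)*1 + (2*p+q)*(2*x) + (-p)*(3*x^2))
        (0 + (2*p+q)*(2*1) + (-p)*(3*(2*u))) u := by
      have ha : HasDerivAt (fun x:ℝ => (2*p+q)*(2*x)) ((2*p+q)*(2*1)) u :=
        (h1'.const_mul 2).const_mul _
      have hb : HasDerivAt (fun x:ℝ => (-p)*(3*x^2)) ((-p)*(3*(2*u))) u :=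
        (h2'.const_mul 3).const_mul _
      exact ((hasDerivAt_const u ((-p-q)*1)).add ha).add hb
    rw [hg.deriv]; ring
  have main : (∀ u ∈ Set.Ioo (0:ℝ) 1, deriv (deriv f) u < 0) ↔ (q ≤ p ∧ 2*p + q ≤ 0) := by
    constructor
    · intro h
      have hA : (4*p + 2*q) + (-6*p) * 1 ≤ 0 := by
        have := lin_neg_aux ((4*p+2*q) + (-6*p)) (6*p) ?_
        · linarith
        · intro v ⟨hv0, hv1⟩
          have h1u : (1 - v) ∈ Set.Ioo (0:ℝ) 1 := ⟨by linarith, by linarith⟩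
          have := h (1-v) h1u
          rw [hf''] at this
          nlinarith
      have hB : (4*p + 2*q) ≤ 0 := by
        apply lin_neg_aux (4*p+2*q) (-6*p)
        intro v hv
        have := h v hv
        rw [hf''] at this
        linarith
      constructor <;> linarith
    · rintro ⟨hqp, h2pq⟩ u ⟨hu0, hu1⟩
      rw [hf'']
      rcases eq_or_lt_of_le h2pq with heq | hlt
      · have hp : 0 < p := by nlinarith
        nlinarith
      · nlinarith [mul_nonneg hu0.le (by linarith : (0:ℝ) ≤ p - q),
          mul_pos (by linarith : (0:ℝ) < 1 - u) (by linarith : (0:ℝ) < -(2*p+q))]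
  rw [main]
  have habs : |Cg| = -Cg := abs_of_neg hCg
  have hK : 0 < -Cg * Dg := mul_pos (by linarith) hDg
  have hsd : s * d = (Ci * Di) / (-Cg * Dg) := by
    rw [hsdef, hddef, habs, div_mul_div_comm]
  rw [hsd, hpdef, hqdef]
  constructor
  · rintro ⟨ha, hb⟩
    constructor
    · exact div_nonneg (by nlinarith) hK.le
    · rw [div_le_iff₀ hK]; nlinarith
  · rintro ⟨ha, hb⟩
    rw [le_div_iff₀ hK] at ha
    rw [div_le_iff₀ hK] at hb
    constructor <;> nlinarith
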